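/- For every finite simple graph G, 𝓜(S(G), x) = x^{|E(G)|−|V(G)|} · 𝓛𝓜(G, x²) as an identity of rational functions (equivalently, x^{|V(G)|} · 𝓜(S(G), x) = x^{|E(G)|} · 𝓛𝓜(G, x²) as polynomials). -/

import Mathlib

namespace LM

open Finset

variable {V : Type*}

/-- The set of matchings of `G`, as finsets of edges that pairwise share no vertex. -/
def matchings [Fintype V] [DecidableEq V] (G : SimpleGraph V) [DecidableRel G.Adj] :
    Finset (Finset (Sym2 V)) :=
  G.edgeFinset.powerset.filter
    (fun M => ∀ e ∈ M, ∀ f ∈ M, e ≠ f → ∀ w : V, w ∈ e → w ∉ f)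

/-- The set of vertices covered by a set of edges. -/
def covered [Fintype V] [DecidableEq V] (M : Finset (Sym2 V)) : Finset V :=
  Finset.univ.filter (fun v => ∃ e ∈ M, v ∈ e)

/-- The multivariate matching polynomial `𝔐(G, x_G)`. -/
noncomputable def mvMatch [Fintype V] [DecidableEq V] (G : SimpleGraph V)
    [DecidableRel G.Adj] : MvPolynomial V ℝ :=
  ∑ M ∈ matchings G, (-1 : MvPolynomial V ℝ) ^ M.card *
    ∏ v ∈ Finset.univ \ covered M, MvPolynomial.X v

/-- The matching polynomial `𝓜(G, x)`. -/
noncomputable def matchPoly [Fintype V] [DecidableEq V] (G : SimpleGraph V)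
    [DecidableRel G.Adj] : Polynomial ℝ :=
  ∑ M ∈ matchings G, (-1 : Polynomial ℝ) ^ M.card *
    Polynomial.X ^ (Fintype.card V - 2 * M.card)

/-- The Laplacian matching polynomial `𝓛𝓜(G, x)`. -/
noncomputable def lapMatch [Fintype V] [DecidableEq V] (G : SimpleGraph V)
    [DecidableRel G.Adj] : Polynomial ℝ :=
  ∑ M ∈ matchings G, (-1 : Polynomial ℝ) ^ M.card *
    ∏ v ∈ Finset.univ \ covered M, (Polynomial.X - Polynomial.C (G.degree v : ℝ))

/-- The largest real root of a polynomial (`sSup` of its set of real roots). -/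
noncomputable def lroot (p : Polynomial ℝ) : ℝ := sSup {x : ℝ | p.IsRoot x}

instance instDecidableRelInduceAdj (G : SimpleGraph V) [DecidableRel G.Adj] (s : Set V) :
    DecidableRel (G.induce s).Adj := fun a b =>
  inferInstanceAs (Decidable (G.Adj a b))

/-- The relation underlying the subdivision of `G`: an original vertex `a` is joined to the
new vertex `v_e` of every edge `e` incident with `a`. -/
def sdRel (G : SimpleGraph V) (x y : V ⊕ G.edgeSet) : Prop :=
  ∃ (a : V) (e : G.edgeSet), x = Sum.inl a ∧ y = Sum.inr e ∧ a ∈ (e : Sym2 V)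

instance [Fintype V] [DecidableEq V] (G : SimpleGraph V) [DecidableRel G.Adj]
    (x y : V ⊕ G.edgeSet) : Decidable (sdRel G x y) :=
  inferInstanceAs (Decidable (∃ (_ : V) (_ : G.edgeSet), _ ∧ _ ∧ _))

/-- The subdivision `S(G)` of `G`: every edge `e = {a, b}` is replaced by a new vertex `v_e`
together with the two edges `{a, v_e}` and `{v_e, b}`. -/
def subdivision (G : SimpleGraph V) : SimpleGraph (V ⊕ G.edgeSet) :=
  SimpleGraph.fromRel (sdRel G)

instance [Fintype V] [DecidableEq V] (G : SimpleGraph V) [DecidableRel G.Adj] :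
    DecidableRel (subdivision G).Adj := fun x y =>
  inferInstanceAs (Decidable (x ≠ y ∧ (sdRel G x y ∨ sdRel G y x)))

/-! ### Auxiliary machinery for the proof -/

section Aux

open Polynomial

variable [Fintype V] [DecidableEq V] (G : SimpleGraph V) [DecidableRel G.Adj]

lemma mem_matchings {M : Finset (Sym2 V)} :
    M ∈ matchings G ↔ M ⊆ G.edgeFinset ∧
      ∀ e ∈ M, ∀ f ∈ M, e ≠ f → ∀ w : V, w ∈ e → w ∉ f := by
  simp [matchings]

lemma mem_covered {N : Finset (Sym2 V)} {v : V} :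
    v ∈ covered N ↔ ∃ e ∈ N, v ∈ e := by
  simp [covered]

open scoped Classical in
noncomputable def fpairs : Finset (Finset (V × G.edgeSet)) :=
  (univ : Finset (Finset (V × G.edgeSet))).filter
    (fun P => (∀ q ∈ P, q.1 ∈ (q.2 : Sym2 V)) ∧ ∀ q ∈ P, ∀ r ∈ P, q.1 = r.1 → q = r)

lemma mem_fpairs {P : Finset (V × G.edgeSet)} :
    P ∈ fpairs G ↔ (∀ q ∈ P, q.1 ∈ (q.2 : Sym2 V)) ∧
      ∀ q ∈ P, ∀ r ∈ P, q.1 = r.1 → q = r := by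
  simp only [fpairs, mem_filter, mem_univ, true_and]

open scoped Classical in
noncomputable def pairings : Finset (Finset (V × G.edgeSet)) :=
  (fpairs G).filter (fun P => ∀ q ∈ P, ∀ r ∈ P, q.2 = r.2 → q = r)

lemma mem_pairings {P : Finset (V × G.edgeSet)} :
    P ∈ pairings G ↔ P ∈ fpairs G ∧ ∀ q ∈ P, ∀ r ∈ P, q.2 = r.2 → q = r := by
  simp [pairings]

open scoped Classical in
noncomputable def fpairsOn (U : Finset V) : Finset (Finset (V × G.edgeSet)) :=
  (fpairs G).filter (fun P => ∀ q ∈ P, q.1 ∈ U)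

lemma mem_fpairsOn {U : Finset V} {P : Finset (V × G.edgeSet)} :
    P ∈ fpairsOn G U ↔ P ∈ fpairs G ∧ ∀ q ∈ P, q.1 ∈ U := by
  simp only [fpairsOn, mem_filter]

open scoped Classical in
noncomputable def pairsOf (N : Finset (Sym2 V)) : Finset (V × G.edgeSet) :=
  univ.filter (fun q => (q.2 : Sym2 V) ∈ N ∧ q.1 ∈ (q.2 : Sym2 V))

lemma mem_pairsOf {N : Finset (Sym2 V)} {q : V × G.edgeSet} :
    q ∈ pairsOf G N ↔ (q.2 : Sym2 V) ∈ N ∧ q.1 ∈ (q.2 : Sym2 V) := by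
  simp only [pairsOf, mem_filter, mem_univ, true_and]

open scoped Classical in
noncomputable def dbl (Q : Finset (V × G.edgeSet)) : Finset (Sym2 V) :=
  G.edgeFinset.filter
    (fun e => ∀ v : V, v ∈ e → ∃ f : G.edgeSet, (f : Sym2 V) = e ∧ (v, f) ∈ Q)

lemma mem_dbl {Q : Finset (V × G.edgeSet)} {e : Sym2 V} :
    e ∈ dbl G Q ↔ e ∈ G.edgeFinset ∧
      ∀ v : V, v ∈ e → ∃ f : G.edgeSet, (f : Sym2 V) = e ∧ (v, f) ∈ Q := by
  simp only [dbl, mem_filter]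

lemma filter_mem_edge : ∀ {e : Sym2 V}, e ∈ G.edgeSet →
    ((univ : Finset V).filter (fun v => v ∈ e)).card = 2 := by
  intro e
  induction e using Sym2.ind with
  | _ a b =>
    intro he
    rw [SimpleGraph.mem_edgeSet] at he
    have hab : a ≠ b := he.ne
    have h : (univ : Finset V).filter (fun v => v ∈ s(a, b)) = {a, b} := by
      ext v; simp [Sym2.mem_iff]
    rw [h, card_insert_of_notMem (by simp [hab]), card_singleton]

lemma sym2_eq_of_mem {e : Sym2 V} {x y : V} (hxy : x ≠ y) (hx : x ∈ e) (hy : y ∈ e) :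
    e = s(x, y) := by
  induction e using Sym2.ind with
  | _ a b =>
    rw [Sym2.mem_iff] at hx hy
    rcases hx with rfl | rfl
    · rcases hy with rfl | rfl
      · exact absurd rfl hxy
      · rfl
    · rcases hy with rfl | rfl
      · exact Sym2.eq_swap
      · exact absurd rfl hxy

lemma covered_eq (N : Finset (Sym2 V)) :
    covered N = N.biUnion (fun e => (univ : Finset V).filter (fun v => v ∈ e)) := by
  ext v; simp [covered]

lemma card_covered {N : Finset (Sym2 V)} (hN : N ∈ matchings G) :
    (covered N).card = 2 * N.card := by
  obtain ⟨hsub, hmat⟩ := (mem_matchings G).mp hN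
  rw [covered_eq, card_biUnion]
  · rw [Finset.sum_congr rfl
      (fun e he => filter_mem_edge G (SimpleGraph.mem_edgeFinset.mp (hsub he)))]
    simp [mul_comm]
  · intro e he f hf hef
    simp only [Function.onFun]
    rw [Finset.disjoint_left]
    intro v hv hv'
    simp only [mem_filter] at hv hv'
    exact hmat e he f hf hef v hv.2 hv'.2

lemma card_pairsOf {N : Finset (Sym2 V)} (hN : N ⊆ G.edgeFinset) :
    (pairsOf G N).card = 2 * N.card := by
  classical
  have h1 : pairsOf G N = ((univ : Finset G.edgeSet).filter
      (fun f : G.edgeSet => (f : Sym2 V) ∈ N)).biUnion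
      (fun f : G.edgeSet => ((univ : Finset V).filter (fun v => v ∈ (f : Sym2 V))).image
        (fun v : V => ((v, f) : V × G.edgeSet))) := by
    ext q
    simp only [mem_pairsOf, mem_biUnion, mem_image, mem_filter, mem_univ, true_and]
    constructor
    · rintro ⟨h1, h2⟩; exact ⟨q.2, h1, q.1, h2, rfl⟩
    · rintro ⟨f, hf, v, hv, rfl⟩; exact ⟨hf, hv⟩
  rw [h1, card_biUnion]
  · have h2 : ∀ f ∈ (univ : Finset G.edgeSet).filter
        (fun f : G.edgeSet => (f : Sym2 V) ∈ N),
        (((univ : Finset V).filter (fun v => v ∈ (f : Sym2 V))).image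
          (fun v : V => ((v, f) : V × G.edgeSet))).card = 2 := by
      intro f _
      rw [Finset.card_image_of_injective _
        (fun a b h => by simpa using congrArg Prod.fst h)]
      exact filter_mem_edge G f.2
    rw [Finset.sum_congr rfl h2]
    have h3 : ((univ : Finset G.edgeSet).filter
        (fun f : G.edgeSet => (f : Sym2 V) ∈ N)).card = N.card := by
      refine Finset.card_bij (fun f _ => (f : Sym2 V)) ?_ ?_ ?_
      · intro f hf; simpa using (Finset.mem_filter.mp hf).2
      · intro f _ f' _ h; exact Subtype.ext h
      · intro e he
        exact ⟨⟨e, SimpleGraph.mem_edgeFinset.mp (hN he)⟩, by simpa using he, rfl⟩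
    rw [Finset.sum_const, h3, smul_eq_mul, mul_comm]
  · intro f _ f' _ hff
    simp only [Function.onFun]
    rw [Finset.disjoint_left]
    rintro q hq hq'
    simp only [mem_image, mem_filter] at hq hq'
    obtain ⟨v, _, rfl⟩ := hq
    obtain ⟨v', _, h⟩ := hq'
    exact hff (congrArg Prod.snd h).symm

lemma card_filter_deg (v : V) :
    ((univ : Finset G.edgeSet).filter
      (fun f : G.edgeSet => v ∈ (f : Sym2 V))).card = G.degree v := by
  rw [← SimpleGraph.card_incidenceFinset_eq_degree]
  refine Finset.card_bij (fun f _ => (f : Sym2 V)) ?_ ?_ ?_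
  · intro f hf
    simp only [mem_filter, mem_univ, true_and] at hf
    rw [SimpleGraph.mem_incidenceFinset]
    exact ⟨f.2, hf⟩
  · intro f _ f' _ h; exact Subtype.ext h
  · intro e he
    rw [SimpleGraph.mem_incidenceFinset] at he
    exact ⟨⟨e, he.1⟩, by simpa using he.2, rfl⟩

lemma card_le_fpairsOn {U : Finset V} {P : Finset (V × G.edgeSet)}
    (h : P ∈ fpairsOn G U) : P.card ≤ U.card := by
  rw [mem_fpairsOn, mem_fpairs] at h
  obtain ⟨⟨_, hinj⟩, hsub⟩ := h
  calc P.card = (P.image Prod.fst).card :=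
        (Finset.card_image_of_injOn
          (fun q hq r hr hqr => hinj q (by simpa using hq) r (by simpa using hr) hqr)).symm
    _ ≤ U.card := Finset.card_le_card (fun x hx => by
        obtain ⟨q, hq, rfl⟩ := Finset.mem_image.mp hx
        exact hsub q hq)

lemma sum_pow_neg_one {α : Type*} [DecidableEq α] (s : Finset α)
    {R : Type*} [Ring R] :
    ∑ t ∈ s.powerset, (-1 : R) ^ t.card = if s = ∅ then 1 else 0 := by
  have h := Finset.sum_powerset_neg_one_pow_card (x := s)
  apply_fun (Int.cast : ℤ → R) at h
  push_cast at h
  simpa using h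

lemma subdivision_adj {x y : V ⊕ G.edgeSet} :
    (subdivision G).Adj x y ↔
      ∃ (a : V) (e : G.edgeSet), a ∈ (e : Sym2 V) ∧
        ((x = Sum.inl a ∧ y = Sum.inr e) ∨ (x = Sum.inr e ∧ y = Sum.inl a)) := by
  rw [subdivision, SimpleGraph.fromRel_adj]
  constructor
  · rintro ⟨hne, h | h⟩
    · obtain ⟨a, e, rfl, rfl, hae⟩ := h
      exact ⟨a, e, hae, Or.inl ⟨rfl, rfl⟩⟩
    · obtain ⟨a, e, rfl, rfl, hae⟩ := h
      exact ⟨a, e, hae, Or.inr ⟨rfl, rfl⟩⟩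
  · rintro ⟨a, e, hae, ⟨rfl, rfl⟩ | ⟨rfl, rfl⟩⟩
    · exact ⟨by simp, Or.inl ⟨a, e, rfl, rfl, hae⟩⟩
    · exact ⟨by simp, Or.inr ⟨a, e, rfl, rfl, hae⟩⟩

lemma pairEdge_inj : Function.Injective
    (fun q : V × G.edgeSet => s(Sum.inl q.1, (Sum.inr q.2 : V ⊕ G.edgeSet))) := by
  rintro ⟨a, e⟩ ⟨a', e'⟩ h
  simp only [Sym2.eq_iff] at h
  rcases h with ⟨h1, h2⟩ | ⟨h1, h2⟩
  · simp only [Sum.inl.injEq, Sum.inr.injEq] at h1 h2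
    exact Prod.ext h1 h2
  · exact absurd h1 (by simp)

/-- The matching of `S(G)` attached to a pairing. -/
def toMatch (Q : Finset (V × G.edgeSet)) : Finset (Sym2 (V ⊕ G.edgeSet)) :=
  Q.image (fun q => s(Sum.inl q.1, (Sum.inr q.2 : V ⊕ G.edgeSet)))

/-- The pairing attached to a matching of `S(G)`. -/
def toPairs (M : Finset (Sym2 (V ⊕ G.edgeSet))) : Finset (V × G.edgeSet) :=
  univ.filter (fun q => s(Sum.inl q.1, (Sum.inr q.2 : V ⊕ G.edgeSet)) ∈ M)

lemma edge_form {ε : Sym2 (V ⊕ G.edgeSet)} (h : ε ∈ (subdivision G).edgeSet) :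
    ∃ (a : V) (e : G.edgeSet), a ∈ (e : Sym2 V) ∧ ε = s(Sum.inl a, Sum.inr e) := by
  revert h
  induction ε using Sym2.ind with
  | _ x y =>
    intro h
    rw [SimpleGraph.mem_edgeSet] at h
    rcases (subdivision_adj G).mp h with ⟨a, e, hae, ⟨rfl, rfl⟩ | ⟨rfl, rfl⟩⟩
    · exact ⟨a, e, hae, rfl⟩
    · exact ⟨a, e, hae, Sym2.eq_swap⟩

lemma toPairs_toMatch (Q : Finset (V × G.edgeSet)) : toPairs G (toMatch G Q) = Q := by
  ext q
  simp only [toPairs, toMatch, mem_filter, mem_univ, true_and, mem_image]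
  constructor
  · rintro ⟨r, hr, h⟩
    obtain rfl := pairEdge_inj G h
    exact hr
  · intro hq; exact ⟨q, hq, rfl⟩

lemma toMatch_toPairs {M : Finset (Sym2 (V ⊕ G.edgeSet))}
    (hM : M ∈ matchings (subdivision G)) : toMatch G (toPairs G M) = M := by
  obtain ⟨hsub, _⟩ := (mem_matchings _).mp hM
  ext ε
  simp only [toMatch, toPairs, mem_image, mem_filter, mem_univ, true_and]
  constructor
  · rintro ⟨q, hq, rfl⟩; exact hq
  · intro hε
    obtain ⟨a, e, hae, rfl⟩ := edge_form G (SimpleGraph.mem_edgeFinset.mp (hsub hε))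
    exact ⟨(a, e), hε, rfl⟩

lemma card_toMatch (Q : Finset (V × G.edgeSet)) : (toMatch G Q).card = Q.card :=
  Finset.card_image_of_injective _ (pairEdge_inj G)

lemma card_toPairs {M : Finset (Sym2 (V ⊕ G.edgeSet))}
    (hM : M ∈ matchings (subdivision G)) : (toPairs G M).card = M.card := by
  conv_rhs => rw [← toMatch_toPairs G hM]
  rw [card_toMatch]

lemma toPairs_mem {M : Finset (Sym2 (V ⊕ G.edgeSet))}
    (hM : M ∈ matchings (subdivision G)) : toPairs G M ∈ pairings G := by
  obtain ⟨hsub, hmat⟩ := (mem_matchings _).mp hM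
  rw [mem_pairings, mem_fpairs]
  refine ⟨⟨?_, ?_⟩, ?_⟩
  · intro q hq
    simp only [toPairs, mem_filter, mem_univ, true_and] at hq
    have h := hsub hq
    rw [SimpleGraph.mem_edgeFinset, SimpleGraph.mem_edgeSet] at h
    rcases (subdivision_adj G).mp h with ⟨a, e, hae, ⟨h1, h2⟩ | ⟨h1, h2⟩⟩
    · obtain rfl : q.1 = a := Sum.inl_injective h1
      obtain rfl : q.2 = e := Sum.inr_injective h2
      exact hae
    · exact absurd h1 (by simp)
  · intro q hq r hr hqr
    simp only [toPairs, mem_filter, mem_univ, true_and] at hq hr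
    by_contra hne
    have hedge : s(Sum.inl q.1, (Sum.inr q.2 : V ⊕ G.edgeSet))
        ≠ s(Sum.inl r.1, (Sum.inr r.2 : V ⊕ G.edgeSet)) :=
      fun h => hne (pairEdge_inj G h)
    have h := hmat _ hq _ hr hedge (Sum.inl q.1) (by simp)
    rw [hqr] at h
    exact h (by simp)
  · intro q hq r hr hqr
    simp only [toPairs, mem_filter, mem_univ, true_and] at hq hr
    by_contra hne
    have hedge : s(Sum.inl q.1, (Sum.inr q.2 : V ⊕ G.edgeSet))
        ≠ s(Sum.inl r.1, (Sum.inr r.2 : V ⊕ G.edgeSet)) :=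
      fun h => hne (pairEdge_inj G h)
    have h := hmat _ hq _ hr hedge (Sum.inr q.2) (by simp)
    rw [hqr] at h
    exact h (by simp)

lemma toMatch_mem {Q : Finset (V × G.edgeSet)} (hQ : Q ∈ pairings G) :
    toMatch G Q ∈ matchings (subdivision G) := by
  rw [mem_pairings, mem_fpairs] at hQ
  obtain ⟨⟨hmem, hfst⟩, hsnd⟩ := hQ
  rw [mem_matchings]
  constructor
  · intro ε hε
    simp only [toMatch, mem_image] at hε
    obtain ⟨q, hq, rfl⟩ := hε
    rw [SimpleGraph.mem_edgeFinset, SimpleGraph.mem_edgeSet]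
    exact (subdivision_adj G).mpr ⟨q.1, q.2, hmem q hq, Or.inl ⟨rfl, rfl⟩⟩
  · rintro ε hε f hf hne w hw hw'
    simp only [toMatch, mem_image] at hε hf
    obtain ⟨q, hq, rfl⟩ := hε
    obtain ⟨r, hr, rfl⟩ := hf
    rw [Sym2.mem_iff] at hw hw'
    rcases hw with rfl | rfl <;> rcases hw' with h | h
    · exact hne (by rw [hfst q hq r hr (Sum.inl_injective h)])
    · exact absurd h (by simp)
    · exact absurd h (by simp)
    · exact hne (by rw [hsnd q hq r hr (Sum.inr_injective h)])

lemma matchPoly_subdivision_sum :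
    matchPoly (subdivision G) = ∑ Q ∈ pairings G,
      (-1 : ℝ[X]) ^ Q.card *
        X ^ (Fintype.card V + G.edgeFinset.card - 2 * Q.card) := by
  have hcard : Fintype.card (V ⊕ G.edgeSet) = Fintype.card V + G.edgeFinset.card := by
    rw [Fintype.card_sum]
    congr 1
    exact (Set.toFinset_card _).symm
  rw [matchPoly]
  refine Finset.sum_nbij' (fun M => toPairs G M) (fun Q => toMatch G Q)
    (fun M hM => toPairs_mem G hM) (fun Q hQ => toMatch_mem G hQ)
    (fun M hM => toMatch_toPairs G hM) (fun Q _ => toPairs_toMatch G Q)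
    (fun M hM => ?_)
  rw [card_toPairs G hM, hcard]

/-- Expanding the product over uncovered vertices as a sum over partial injections. -/
lemma expand (U : Finset V) :
    ∏ v ∈ U, ((X : ℝ[X]) ^ 2 - C (G.degree v : ℝ)) =
      ∑ P ∈ fpairsOn G U, (-1 : ℝ[X]) ^ P.card * X ^ (2 * (U.card - P.card)) := by
  induction U using Finset.induction_on with
  | empty =>
    have h : fpairsOn G (∅ : Finset V) = {∅} := by
      ext P
      rw [mem_fpairsOn, mem_singleton]
      constructor
      · rintro ⟨_, h2⟩
        exact Finset.eq_empty_iff_forall_notMem.mpr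
          (fun q hq => absurd (h2 q hq) (notMem_empty _))
      · rintro rfl
        exact ⟨(mem_fpairs G).mpr ⟨by simp, by simp⟩, by simp⟩
    rw [h]
    simp
  | @insert v U hv ih =>
    rw [Finset.prod_insert hv, ih]
    have exu : ∀ P ∈ (fpairsOn G (insert v U)).filter
        (fun P => ∃ f : G.edgeSet, (v, f) ∈ P), ∃! q, q ∈ P ∧ q.1 = v := by
      intro P hP
      rw [mem_filter, mem_fpairsOn, mem_fpairs] at hP
      obtain ⟨⟨⟨_, hinj⟩, _⟩, f, hf⟩ := hP
      exact ⟨(v, f), ⟨hf, rfl⟩, fun r hr => hinj r hr.1 (v, f) hf (by rw [hr.2])⟩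
    have hsplit := Finset.sum_filter_add_sum_filter_not (fpairsOn G (insert v U))
      (fun P => ∃ f : G.edgeSet, (v, f) ∈ P)
      (fun P => (-1 : ℝ[X]) ^ P.card * X ^ (2 * ((insert v U).card - P.card)))
    rw [← hsplit]
    have hnot : (fpairsOn G (insert v U)).filter
        (fun P => ¬ ∃ f : G.edgeSet, (v, f) ∈ P) = fpairsOn G U := by
      ext P
      rw [mem_filter, mem_fpairsOn, mem_fpairsOn]
      constructor
      · rintro ⟨⟨h1, h2⟩, h3⟩
        refine ⟨h1, fun q hq => ?_⟩
        rcases Finset.mem_insert.mp (h2 q hq) with h | h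
        · refine absurd ⟨q.2, ?_⟩ h3
          rw [← h]
          simpa using hq
        · exact h
      · rintro ⟨h1, h2⟩
        refine ⟨⟨h1, fun q hq => mem_insert_of_mem (h2 q hq)⟩, ?_⟩
        rintro ⟨f, hf⟩
        exact hv (h2 (v, f) hf)
    have hyes : ∑ P ∈ (fpairsOn G (insert v U)).filter
          (fun P => ∃ f : G.edgeSet, (v, f) ∈ P),
          (-1 : ℝ[X]) ^ P.card * X ^ (2 * ((insert v U).card - P.card))
        = ∑ x ∈ ((univ : Finset G.edgeSet).filter (fun f : G.edgeSet => v ∈ (f : Sym2 V)))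
            ×ˢ fpairsOn G U,
            -((-1 : ℝ[X]) ^ x.2.card * X ^ (2 * (U.card - x.2.card))) := by
      refine (Finset.sum_bij' (fun x _ => insert (v, x.1) x.2)
        (fun P hP => ((Finset.choose (fun q => q.1 = v) P (exu P hP)).2,
          P.erase (Finset.choose (fun q => q.1 = v) P (exu P hP))))
        ?_ ?_ ?_ ?_ ?_).symm
      · rintro ⟨f, P⟩ hx
        rw [Finset.mem_product, mem_filter] at hx
        obtain ⟨⟨_, hfv⟩, hP⟩ := hx
        rw [mem_fpairsOn, mem_fpairs] at hP
        obtain ⟨⟨hmem, hinj⟩, hsub⟩ := hP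
        rw [mem_filter, mem_fpairsOn, mem_fpairs]
        refine ⟨⟨⟨?_, ?_⟩, ?_⟩, f, mem_insert_self _ _⟩
        · intro q hq
          rcases Finset.mem_insert.mp hq with rfl | hq'
          · exact hfv
          · exact hmem q hq'
        · intro q hq r hr hqr
          rcases Finset.mem_insert.mp hq with rfl | hq' <;>
            rcases Finset.mem_insert.mp hr with rfl | hr'
          · rfl
          · refine absurd ?_ hv
            rw [show v = r.1 from hqr]
            exact hsub r hr'
          · refine absurd ?_ hv
            rw [show v = q.1 from hqr.symm]
            exact hsub q hq'
          · exact hinj q hq' r hr' hqr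
        · intro q hq
          rcases Finset.mem_insert.mp hq with rfl | hq'
          · exact mem_insert_self _ _
          · exact mem_insert_of_mem (hsub q hq')
      · intro P hP
        have hspec := Finset.choose_spec (fun q => q.1 = v) P (exu P hP)
        set q0 := Finset.choose (fun q => q.1 = v) P (exu P hP) with hq0
        rw [mem_filter, mem_fpairsOn, mem_fpairs] at hP
        obtain ⟨⟨⟨hmem, hinj⟩, hsub⟩, _⟩ := hP
        rw [Finset.mem_product, mem_filter]
        refine ⟨⟨mem_univ _, ?_⟩, ?_⟩
        · have := hmem q0 hspec.1
          rwa [hspec.2] at this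
        · rw [mem_fpairsOn, mem_fpairs]
          refine ⟨⟨fun q hq => hmem q (Finset.mem_of_mem_erase hq),
            fun q hq r hr => hinj q (Finset.mem_of_mem_erase hq) r
              (Finset.mem_of_mem_erase hr)⟩, ?_⟩
          intro q hq
          have hqP := Finset.mem_of_mem_erase hq
          rcases Finset.mem_insert.mp (hsub q hqP) with h | h
          · exact absurd (hinj q hqP q0 hspec.1 (h.trans hspec.2.symm))
              (Finset.ne_of_mem_erase hq)
          · exact h
      · rintro ⟨f, P⟩ hx
        rw [Finset.mem_product, mem_filter] at hx
        obtain ⟨⟨_, _⟩, hP⟩ := hx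
        have hsub : ∀ q ∈ P, q.1 ∈ U := ((mem_fpairsOn G).mp hP).2
        have hvP : (v, f) ∉ P := fun h => hv (hsub (v, f) h)
        have key : ∀ (h : ∃! q : V × G.edgeSet, q ∈ insert (v, f) P ∧ q.1 = v),
            Finset.choose (fun q => q.1 = v) (insert (v, f) P) h = (v, f) :=
          fun h => h.unique (Finset.choose_spec (fun q : V × G.edgeSet => q.1 = v) _ h)
            ⟨mem_insert_self _ _, rfl⟩
        simp [key, Finset.erase_insert hvP]
      · intro P hP
        have hspec := Finset.choose_spec (fun q => q.1 = v) P (exu P hP)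
        set q0 := Finset.choose (fun q => q.1 = v) P (exu P hP) with hq0
        have hpair : ((v, q0.2) : V × G.edgeSet) = q0 :=
          Prod.ext_iff.mpr ⟨hspec.2.symm, rfl⟩
        show insert (v, q0.2) (P.erase q0) = P
        rw [hpair, Finset.insert_erase hspec.1]
      · rintro ⟨f, P⟩ hx
        rw [Finset.mem_product, mem_filter] at hx
        obtain ⟨⟨_, _⟩, hP⟩ := hx
        have hsub : ∀ q ∈ P, q.1 ∈ U := ((mem_fpairsOn G).mp hP).2
        have hvP : (v, f) ∉ P := fun h => hv (hsub (v, f) h)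
        show -((-1 : ℝ[X]) ^ P.card * X ^ (2 * (U.card - P.card)))
            = (-1 : ℝ[X]) ^ (insert (v, f) P).card *
              X ^ (2 * ((insert v U).card - (insert (v, f) P).card))
        rw [Finset.card_insert_of_notMem hvP, Finset.card_insert_of_notMem hv,
          Nat.add_sub_add_right, pow_succ]
        ring
    rw [hnot, hyes, Finset.sum_product]
    have hin : ∀ f ∈ (univ : Finset G.edgeSet).filter
        (fun f : G.edgeSet => v ∈ (f : Sym2 V)),
        (∑ P ∈ fpairsOn G U, -((-1 : ℝ[X]) ^ P.card * X ^ (2 * (U.card - P.card))))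
        = -(∑ P ∈ fpairsOn G U, (-1 : ℝ[X]) ^ P.card * X ^ (2 * (U.card - P.card))) :=
      fun _ _ => by rw [Finset.sum_neg_distrib]
    rw [Finset.sum_congr rfl hin, Finset.sum_const, nsmul_eq_mul, card_filter_deg G v]
    have hnot2 : ∑ P ∈ fpairsOn G U,
        (-1 : ℝ[X]) ^ P.card * X ^ (2 * ((insert v U).card - P.card))
        = (∑ P ∈ fpairsOn G U, (-1 : ℝ[X]) ^ P.card * X ^ (2 * (U.card - P.card))) * X ^ 2 := by
      rw [Finset.sum_mul]
      refine Finset.sum_congr rfl (fun P hP => ?_)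
      have hle := card_le_fpairsOn G hP
      rw [Finset.card_insert_of_notMem hv,
        show 2 * (U.card + 1 - P.card) = 2 * (U.card - P.card) + 2 by omega, pow_add]
      ring
    rw [hnot2, map_natCast (C : ℝ →+* ℝ[X]) (G.degree v)]
    ring

lemma disjoint_pairsOf {N : Finset (Sym2 V)} {P : Finset (V × G.edgeSet)}
    (hP : P ∈ fpairsOn G (univ \ covered N)) : Disjoint P (pairsOf G N) := by
  rw [Finset.disjoint_left]
  intro q hq hq'
  rw [mem_pairsOf] at hq'
  have h1 : q.1 ∈ univ \ covered N := ((mem_fpairsOn G).mp hP).2 q hq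
  rw [Finset.mem_sdiff] at h1
  exact h1.2 (mem_covered.mpr ⟨(q.2 : Sym2 V), hq'.1, hq'.2⟩)

lemma pairsOf_subset {N : Finset (Sym2 V)} {Q : Finset (V × G.edgeSet)}
    (hN : N ⊆ dbl G Q) : pairsOf G N ⊆ Q := by
  intro q hq
  rw [mem_pairsOf] at hq
  obtain ⟨f, hfval, hfQ⟩ := ((mem_dbl G).mp (hN hq.1)).2 q.1 hq.2
  have : f = q.2 := Subtype.ext hfval
  rw [this] at hfQ
  rwa [show ((q.1, q.2) : V × G.edgeSet) = q from rfl] at hfQ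

/-- The central reindexing step. -/
lemma reindex :
    ∑ N ∈ matchings G, ∑ P ∈ fpairsOn G (univ \ covered N),
        (-1 : Polynomial ℝ) ^ (N.card + P.card) *
          Polynomial.X ^ (G.edgeFinset.card +
            2 * ((Fintype.card V - 2 * N.card) - P.card))
      = ∑ Q ∈ fpairs G, ∑ N ∈ (dbl G Q).powerset,
        (-1 : Polynomial ℝ) ^ (Q.card + N.card) *
          Polynomial.X ^ (G.edgeFinset.card + 2 * (Fintype.card V - Q.card)) := by
  rw [Finset.sum_sigma', Finset.sum_sigma']
  refine Finset.sum_nbij' (fun x => ⟨x.2 ∪ pairsOf G x.1, x.1⟩)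
    (fun y => ⟨y.2, y.1 \ pairsOf G y.2⟩) ?_ ?_ ?_ ?_ ?_
  · rintro ⟨N, P⟩ hx
    rw [Finset.mem_sigma] at hx
    obtain ⟨hN, hP⟩ := hx
    obtain ⟨hNsub, hNmat⟩ := (mem_matchings G).mp hN
    obtain ⟨hPf, hPsub⟩ := (mem_fpairsOn G).mp hP
    obtain ⟨hPmem, hPinj⟩ := (mem_fpairs G).mp hPf
    rw [Finset.mem_sigma, Finset.mem_powerset]
    constructor
    · rw [mem_fpairs]
      constructor
      · intro q hq
        rcases Finset.mem_union.mp hq with h | h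
        · exact hPmem q h
        · exact ((mem_pairsOf G).mp h).2
      · intro q hq r hr hqr
        rcases Finset.mem_union.mp hq with h | h <;>
          rcases Finset.mem_union.mp hr with h' | h'
        · exact hPinj q h r h' hqr
        · exfalso
          have h1 := hPsub q h
          rw [Finset.mem_sdiff] at h1
          obtain ⟨hr1, hr2⟩ := (mem_pairsOf G).mp h'
          exact h1.2 (mem_covered.mpr ⟨(r.2 : Sym2 V), hr1, hqr ▸ hr2⟩)
        · exfalso
          have h1 := hPsub r h'
          rw [Finset.mem_sdiff] at h1
          obtain ⟨hq1, hq2⟩ := (mem_pairsOf G).mp h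
          exact h1.2 (mem_covered.mpr ⟨(q.2 : Sym2 V), hq1, hqr ▸ hq2⟩)
        · obtain ⟨hq1, hq2⟩ := (mem_pairsOf G).mp h
          obtain ⟨hr1, hr2⟩ := (mem_pairsOf G).mp h'
          have hval : (q.2 : Sym2 V) = (r.2 : Sym2 V) := by
            by_contra hne
            exact hNmat _ hq1 _ hr1 hne q.1 hq2 (hqr ▸ hr2)
          exact Prod.ext_iff.mpr ⟨hqr, Subtype.ext hval⟩
    · intro e he
      rw [mem_dbl]
      refine ⟨hNsub he, fun w hw => ?_⟩
      refine ⟨⟨e, SimpleGraph.mem_edgeFinset.mp (hNsub he)⟩, rfl, ?_⟩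
      exact Finset.mem_union_right _ ((mem_pairsOf G).mpr ⟨he, hw⟩)
  · rintro ⟨Q, N⟩ hy
    rw [Finset.mem_sigma, Finset.mem_powerset] at hy
    obtain ⟨hQ, hN⟩ := hy
    obtain ⟨hQmem, hQinj⟩ := (mem_fpairs G).mp hQ
    rw [Finset.mem_sigma]
    constructor
    · rw [mem_matchings]
      refine ⟨fun e he => ((mem_dbl G).mp (hN he)).1, ?_⟩
      intro e he f hf hef w hwe hwf
      obtain ⟨fe, hfeval, hfeQ⟩ := ((mem_dbl G).mp (hN he)).2 w hwe
      obtain ⟨ff, hffval, hffQ⟩ := ((mem_dbl G).mp (hN hf)).2 w hwf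
      have h := hQinj _ hfeQ _ hffQ rfl
      have : fe = ff := by simpa using congrArg Prod.snd h
      exact hef (hfeval.symm.trans (this ▸ hffval))
    · rw [mem_fpairsOn, mem_fpairs]
      refine ⟨⟨fun q hq => hQmem q (Finset.mem_sdiff.mp hq).1,
        fun q hq r hr => hQinj q (Finset.mem_sdiff.mp hq).1 r (Finset.mem_sdiff.mp hr).1⟩, ?_⟩
      intro q hq
      rw [Finset.mem_sdiff] at hq
      rw [Finset.mem_sdiff]
      refine ⟨mem_univ _, fun hcov => ?_⟩
      obtain ⟨e, heN, hqe⟩ := mem_covered.mp hcov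
      obtain ⟨f, hfval, hfQ⟩ := ((mem_dbl G).mp (hN heN)).2 q.1 hqe
      have h : q = (q.1, f) := hQinj q hq.1 (q.1, f) hfQ rfl
      apply hq.2
      rw [mem_pairsOf, h]
      exact ⟨hfval.symm ▸ heN, hfval.symm ▸ hqe⟩
  · rintro ⟨N, P⟩ hx
    rw [Finset.mem_sigma] at hx
    have hd := disjoint_pairsOf G hx.2
    have h : (P ∪ pairsOf G N) \ pairsOf G N = P :=
      Finset.union_sdiff_cancel_right hd
    simp only [h]
  · rintro ⟨Q, N⟩ hy
    rw [Finset.mem_sigma, Finset.mem_powerset] at hy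
    have h : (Q \ pairsOf G N) ∪ pairsOf G N = Q :=
      Finset.sdiff_union_of_subset (pairsOf_subset G hy.2)
    simp only [h]
  · rintro ⟨N, P⟩ hx
    rw [Finset.mem_sigma] at hx
    obtain ⟨hN, hP⟩ := hx
    have hd := disjoint_pairsOf G hP
    have hNsub : N ⊆ G.edgeFinset := ((mem_matchings G).mp hN).1
    have hcard : (P ∪ pairsOf G N).card = P.card + 2 * N.card := by
      rw [Finset.card_union_of_disjoint hd, card_pairsOf G hNsub]
    have hcov : (covered N).card = 2 * N.card := card_covered G hN
    have hle1 : (univ \ covered N).card = Fintype.card V - 2 * N.card := by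
      rw [Finset.card_sdiff_of_subset (Finset.subset_univ _), Finset.card_univ, hcov]
    have hle2 : P.card ≤ Fintype.card V - 2 * N.card := hle1 ▸ card_le_fpairsOn G hP
    have hle3 : 2 * N.card ≤ Fintype.card V := by
      rw [← hcov, ← Finset.card_univ]
      exact Finset.card_le_card (Finset.subset_univ _)
    dsimp only
    rw [hcard]
    have hsign : (-1 : Polynomial ℝ) ^ (P.card + 2 * N.card + N.card)
        = (-1 : Polynomial ℝ) ^ (N.card + P.card) := by
      rw [show P.card + 2 * N.card + N.card = (N.card + P.card) + 2 * N.card by ring,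
        pow_add, pow_mul]
      norm_num
    have hexp : G.edgeFinset.card + 2 * ((Fintype.card V - 2 * N.card) - P.card)
        = G.edgeFinset.card + 2 * (Fintype.card V - (P.card + 2 * N.card)) := by omega
    rw [hsign, hexp]

lemma filter_dbl_eq :
    (fpairs G).filter (fun Q => dbl G Q = ∅) = pairings G := by
  ext Q
  rw [mem_filter, mem_pairings]
  constructor
  · rintro ⟨hQ, hd⟩
    refine ⟨hQ, fun q hq r hr h2 => ?_⟩
    by_contra hne
    obtain ⟨hmem, _⟩ := (mem_fpairs G).mp hQ
    have h1 : q.1 ≠ r.1 := fun h1 => hne (Prod.ext_iff.mpr ⟨h1, h2⟩)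
    have hq1 : q.1 ∈ (q.2 : Sym2 V) := hmem q hq
    have hr1 : r.1 ∈ (q.2 : Sym2 V) := by rw [h2]; exact hmem r hr
    have he : (q.2 : Sym2 V) = s(q.1, r.1) := sym2_eq_of_mem h1 hq1 hr1
    have hd2 : (q.2 : Sym2 V) ∈ dbl G Q := by
      rw [mem_dbl]
      refine ⟨SimpleGraph.mem_edgeFinset.mpr q.2.2, fun w hw => ?_⟩
      rw [he, Sym2.mem_iff] at hw
      rcases hw with rfl | rfl
      · exact ⟨q.2, rfl, by rwa [show ((q.1, q.2) : V × G.edgeSet) = q from rfl]⟩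
      · refine ⟨r.2, by rw [← h2], ?_⟩
        rwa [show ((r.1, r.2) : V × G.edgeSet) = r from rfl]
    rw [hd] at hd2
    exact absurd hd2 (Finset.notMem_empty _)
  · rintro ⟨hQ, hsnd⟩
    refine ⟨hQ, ?_⟩
    rw [Finset.eq_empty_iff_forall_notMem]
    intro e he
    rw [mem_dbl] at he
    obtain ⟨heE, hall⟩ := he
    rw [SimpleGraph.mem_edgeFinset] at heE
    obtain ⟨a, b, hab, rfl⟩ : ∃ a b, a ≠ b ∧ e = s(a, b) := by
      revert heE
      induction e using Sym2.ind with
      | _ a b =>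
        intro h
        exact ⟨a, b, ((SimpleGraph.mem_edgeSet G).mp h).ne, rfl⟩
    obtain ⟨f, hfval, hfQ⟩ := hall a (by simp)
    obtain ⟨f', hfval', hfQ'⟩ := hall b (by simp)
    have hff : f = f' := Subtype.ext (hfval.trans hfval'.symm)
    have h := hsnd (a, f) hfQ (b, f') hfQ' (by simpa using hff)
    exact hab (by simpa using congrArg Prod.fst h)

lemma pairings_card_le {Q : Finset (V × G.edgeSet)} (hQ : Q ∈ pairings G) :
    Q.card ≤ Fintype.card V ∧ Q.card ≤ G.edgeFinset.card := by
  obtain ⟨hQf, hsnd⟩ := (mem_pairings G).mp hQ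
  constructor
  · have : Q ∈ fpairsOn G univ :=
      (mem_fpairsOn G).mpr ⟨hQf, fun q _ => mem_univ _⟩
    simpa [Finset.card_univ] using card_le_fpairsOn G this
  · have h1 : Q.card = (Q.image Prod.snd).card :=
      (Finset.card_image_of_injOn
        (fun q hq r hr hqr => hsnd q (by simpa using hq) r (by simpa using hr) hqr)).symm
    rw [h1, show G.edgeFinset.card = Fintype.card G.edgeSet from Set.toFinset_card _,
      ← Finset.card_univ]
    exact Finset.card_le_card (Finset.subset_univ _)

theorem main_aux :
    (X : ℝ[X]) ^ (Fintype.card V) * matchPoly (subdivision G) =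
      (X : ℝ[X]) ^ G.edgeFinset.card * (lapMatch G).comp (X ^ 2) := by
  have hL : (X : ℝ[X]) ^ (Fintype.card V) * matchPoly (subdivision G)
      = ∑ Q ∈ pairings G, (-1 : ℝ[X]) ^ Q.card *
          X ^ (G.edgeFinset.card + 2 * (Fintype.card V - Q.card)) := by
    rw [matchPoly_subdivision_sum, Finset.mul_sum]
    refine Finset.sum_congr rfl (fun Q hQ => ?_)
    obtain ⟨h1, h2⟩ := pairings_card_le G hQ
    rw [show (X : ℝ[X]) ^ Fintype.card V *
        ((-1) ^ Q.card * X ^ (Fintype.card V + G.edgeFinset.card - 2 * Q.card))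
        = (-1) ^ Q.card * (X ^ Fintype.card V *
          X ^ (Fintype.card V + G.edgeFinset.card - 2 * Q.card)) by ring, ← pow_add]
    congr 2
    omega
  have hR : (X : ℝ[X]) ^ G.edgeFinset.card * (lapMatch G).comp (X ^ 2)
      = ∑ Q ∈ pairings G, (-1 : ℝ[X]) ^ Q.card *
          X ^ (G.edgeFinset.card + 2 * (Fintype.card V - Q.card)) := by
    rw [lapMatch, Polynomial.sum_comp]
    simp only [Polynomial.mul_comp, Polynomial.pow_comp, Polynomial.neg_comp,
      Polynomial.one_comp, Polynomial.prod_comp, Polynomial.sub_comp,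
      Polynomial.X_comp, Polynomial.C_comp]
    rw [Finset.mul_sum]
    have hstep : ∀ N ∈ matchings G,
        (X : ℝ[X]) ^ G.edgeFinset.card * ((-1) ^ N.card *
          ∏ v ∈ univ \ covered N, ((X : ℝ[X]) ^ 2 - Polynomial.C (G.degree v : ℝ)))
        = ∑ P ∈ fpairsOn G (univ \ covered N),
            (-1 : ℝ[X]) ^ (N.card + P.card) *
              X ^ (G.edgeFinset.card + 2 * ((Fintype.card V - 2 * N.card) - P.card)) := by
      intro N hN
      have hU : (univ \ covered N).card = Fintype.card V - 2 * N.card := by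
        rw [Finset.card_sdiff_of_subset (Finset.subset_univ _), Finset.card_univ, card_covered G hN]
      rw [expand, Finset.mul_sum, Finset.mul_sum]
      refine Finset.sum_congr rfl (fun P hP => ?_)
      rw [hU]
      simp only [pow_add]
      ring
    rw [Finset.sum_congr rfl hstep, reindex G]
    have hinner : ∀ Q ∈ fpairs G,
        (∑ N ∈ (dbl G Q).powerset, (-1 : ℝ[X]) ^ (Q.card + N.card) *
          X ^ (G.edgeFinset.card + 2 * (Fintype.card V - Q.card)))
        = (if dbl G Q = ∅ then ((-1 : ℝ[X]) ^ Q.card *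
            X ^ (G.edgeFinset.card + 2 * (Fintype.card V - Q.card))) else 0) := by
      intro Q _
      have h1 : ∀ N ∈ (dbl G Q).powerset,
          (-1 : ℝ[X]) ^ (Q.card + N.card) *
            X ^ (G.edgeFinset.card + 2 * (Fintype.card V - Q.card))
          = (-1 : ℝ[X]) ^ N.card * ((-1 : ℝ[X]) ^ Q.card *
            X ^ (G.edgeFinset.card + 2 * (Fintype.card V - Q.card))) :=
        fun N _ => by rw [pow_add]; ring
      rw [Finset.sum_congr rfl h1, ← Finset.sum_mul, sum_pow_neg_one]
      split_ifs <;> simp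
    rw [Finset.sum_congr rfl hinner, ← Finset.sum_filter, filter_dbl_eq]
  rw [hL, hR]

end Aux

/-- `𝓜(S(G), x) = x^{|E(G)|−|V(G)|} · 𝓛𝓜(G, x²)` as rational functions;
equivalently, as polynomials, `x^{|V(G)|} · 𝓜(S(G), x) = x^{|E(G)|} · 𝓛𝓜(G, x²)`. -/
theorem matchPoly_subdivision [Fintype V] [DecidableEq V] (G : SimpleGraph V)
    [DecidableRel G.Adj] :
    Polynomial.X ^ (Fintype.card V) * matchPoly (subdivision G) =
      Polynomial.X ^ G.edgeFinset.card * (lapMatch G).comp (Polynomial.X ^ 2) := by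
  exact main_aux G

end LM
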